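/- arXiv:funct-an/9709003 — 3 statements merged into one kernel-verified Lean document; each statement's English description precedes it below -/
import Mathlib

section
/- For the minimizer φ₀ of J[φ] = ∫_a^b (φ'(t)² + m²φ(t)²) dt subject to φ(a) = c_a, one has lim_{m→∞} J[φ₀] / (m c_a²) = 1. -/
open Real MeasureTheory intervalIntegral

/-- The minimizer of `J[φ] = ∫_a^b (φ'² + m²φ²)` subject to `φ(a) = c_a`. -/
noncomputable def phiMin (a b c_a m t : ℝ) : ℝ :=
  (c_a * (Real.exp (-m * a) + Real.exp (m * (a - 2 * b)))⁻¹) * Real.exp (-m * t)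
    + (c_a * (Real.exp (-m * a) + Real.exp (m * (a - 2 * b)))⁻¹ * Real.exp (-2 * m * b))
      * Real.exp (m * t)

/-- The value `J[φ₀]` of the functional at the minimizer. -/
noncomputable def Jmin (a b c_a m : ℝ) : ℝ :=
  ∫ t in a..b, (deriv (phiMin a b c_a m) t) ^ 2 + m ^ 2 * (phiMin a b c_a m t) ^ 2

lemma exp_deriv (k t : ℝ) : HasDerivAt (fun t => Real.exp (k * t)) (k * Real.exp (k * t)) t := by
  have h : HasDerivAt (fun t : ℝ => k * t) k t := by simpa using (hasDerivAt_id t).const_mul k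
  simpa [mul_comm] using h.exp

lemma hasDerivAt_phiMin (a b c_a m t : ℝ) :
    HasDerivAt (phiMin a b c_a m)
      ((c_a * (Real.exp (-m * a) + Real.exp (m * (a - 2 * b)))⁻¹) * (-m * Real.exp (-m * t))
        + (c_a * (Real.exp (-m * a) + Real.exp (m * (a - 2 * b)))⁻¹ * Real.exp (-2 * m * b))
          * (m * Real.exp (m * t))) t := by
  unfold phiMin
  exact ((exp_deriv (-m) t).const_mul _).add ((exp_deriv m t).const_mul _)

lemma integrand_eq (a b c_a m t : ℝ) :
    (deriv (phiMin a b c_a m) t) ^ 2 + m ^ 2 * (phiMin a b c_a m t) ^ 2 =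
      2 * m ^ 2 * (c_a * (Real.exp (-m * a) + Real.exp (m * (a - 2 * b)))⁻¹) ^ 2
          * Real.exp (-m * t) ^ 2
        + 2 * m ^ 2 * (c_a * (Real.exp (-m * a) + Real.exp (m * (a - 2 * b)))⁻¹
          * Real.exp (-2 * m * b)) ^ 2 * Real.exp (m * t) ^ 2 := by
  rw [(hasDerivAt_phiMin a b c_a m t).deriv]
  unfold phiMin
  ring

lemma Jmin_eq (a b c_a m : ℝ) :
    Jmin a b c_a m =
      let d1 := c_a * (Real.exp (-m * a) + Real.exp (m * (a - 2 * b)))⁻¹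
      let d2 := d1 * Real.exp (-2 * m * b)
      (-(m * d1 ^ 2) * Real.exp (-m * b) ^ 2 + m * d2 ^ 2 * Real.exp (m * b) ^ 2)
        - (-(m * d1 ^ 2) * Real.exp (-m * a) ^ 2 + m * d2 ^ 2 * Real.exp (m * a) ^ 2) := by
  set d1 := c_a * (Real.exp (-m * a) + Real.exp (m * (a - 2 * b)))⁻¹ with hd1
  set d2 := d1 * Real.exp (-2 * m * b) with hd2
  have h1 : Jmin a b c_a m = ∫ t in a..b,
      (2 * m ^ 2 * d1 ^ 2 * Real.exp (-m * t) ^ 2 + 2 * m ^ 2 * d2 ^ 2 * Real.exp (m * t) ^ 2) := by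
    unfold Jmin
    refine intervalIntegral.integral_congr fun t _ => ?_
    rw [integrand_eq]
  rw [h1]
  have hF : ∀ t : ℝ, HasDerivAt
      (fun t => -(m * d1 ^ 2) * Real.exp (-m * t) ^ 2 + m * d2 ^ 2 * Real.exp (m * t) ^ 2)
      (2 * m ^ 2 * d1 ^ 2 * Real.exp (-m * t) ^ 2 + 2 * m ^ 2 * d2 ^ 2 * Real.exp (m * t) ^ 2)
      t := by
    intro t
    have h1 := (((exp_deriv (-m) t).pow 2).const_mul (-(m * d1 ^ 2))).add
      (((exp_deriv m t).pow 2).const_mul (m * d2 ^ 2))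
    exact h1.congr_deriv (by rw [show (2:ℕ) - 1 = 1 from rfl]; push_cast; ring)
  have hcont : Continuous fun t : ℝ =>
      2 * m ^ 2 * d1 ^ 2 * Real.exp (-m * t) ^ 2 + 2 * m ^ 2 * d2 ^ 2 * Real.exp (m * t) ^ 2 := by
    continuity
  rw [intervalIntegral.integral_eq_sub_of_hasDerivAt (fun t _ => hF t)
    (hcont.intervalIntegrable a b)]

lemma Jmin_closed (a b c_a m : ℝ) :
    Jmin a b c_a m = m * c_a ^ 2 * (1 - Real.exp (2 * m * (a - b))) / (1 + Real.exp (2 * m * (a - b))) := by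
  rw [Jmin_eq]
  simp only []
  set x := Real.exp (m * a) with hx
  set y := Real.exp (m * b) with hy
  have hx0 : 0 < x := Real.exp_pos _
  have hy0 : 0 < y := Real.exp_pos _
  have e1 : Real.exp (-m * a) = x⁻¹ := by rw [hx, ← Real.exp_neg]; ring_nf
  have e2 : Real.exp (-m * b) = y⁻¹ := by rw [hy, ← Real.exp_neg]; ring_nf
  have e3 : Real.exp (m * (a - 2 * b)) = x * (y ^ 2)⁻¹ := by
    rw [hx, hy, ← Real.exp_nat_mul]
    rw [← Real.exp_neg, ← Real.exp_add]
    ring_nf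
  have e4 : Real.exp (-2 * m * b) = (y ^ 2)⁻¹ := by
    rw [hy, ← Real.exp_nat_mul, ← Real.exp_neg]
    ring_nf
  have e5 : Real.exp (2 * m * (a - b)) = x ^ 2 * (y ^ 2)⁻¹ := by
    rw [hx, hy, ← Real.exp_nat_mul, ← Real.exp_nat_mul, ← Real.exp_neg, ← Real.exp_add]
    ring_nf
  rw [e1, e2, e3, e4, e5]
  have hden : x⁻¹ + x * (y ^ 2)⁻¹ > 0 := by positivity
  have hden2 : 1 + x ^ 2 * (y ^ 2)⁻¹ > 0 := by positivity
  field_simp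
  ring

theorem stmt_2 (a b c_a : ℝ) (hab : a < b) (hc : c_a ≠ 0) :
    Filter.Tendsto (fun m : ℝ => Jmin a b c_a m / (m * c_a ^ 2))
      Filter.atTop (nhds 1) := by
  have hE : Filter.Tendsto (fun m : ℝ => Real.exp (2 * m * (a - b))) Filter.atTop (nhds 0) := by
    apply Real.tendsto_exp_atBot.comp
    have h1 : Filter.Tendsto (fun m : ℝ => m * (2 * (a - b))) Filter.atTop Filter.atBot :=
      Filter.Tendsto.atTop_mul_const_of_neg (by linarith) Filter.tendsto_id
    convert h1 using 2 with m
    ring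
  have h2 : Filter.Tendsto (fun m : ℝ =>
      (1 - Real.exp (2 * m * (a - b))) / (1 + Real.exp (2 * m * (a - b))))
      Filter.atTop (nhds 1) := by
    have hnum : Filter.Tendsto (fun m : ℝ => 1 - Real.exp (2 * m * (a - b)))
        Filter.atTop (nhds (1 - 0)) := tendsto_const_nhds.sub hE
    have hden : Filter.Tendsto (fun m : ℝ => 1 + Real.exp (2 * m * (a - b)))
        Filter.atTop (nhds (1 + 0)) := tendsto_const_nhds.add hE
    have := hnum.div hden (by norm_num)
    simpa [Pi.div_def] using this
  refine h2.congr' ?_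
  filter_upwards [Filter.eventually_gt_atTop 0] with m hm
  rw [Jmin_closed]
  have hden : (0:ℝ) < 1 + Real.exp (2 * m * (a - b)) := by positivity
  field_simp
end

section
/- Let f : [0,L] → ℝ be C¹ with f(0) = 0. Then ∫_0^L f'(t)² dt ≥ (π/(2L))² ∫_0^L f(t)² dt. -/
open Real MeasureTheory intervalIntegral

theorem stmt_11 (L : ℝ) (hL : 0 < L) (f : ℝ → ℝ)
    (hf : ContDiffOn ℝ 1 f (Set.Icc 0 L)) (hf0 : f 0 = 0) :
    (π / (2 * L)) ^ 2 * (∫ t in (0:ℝ)..L, (f t) ^ 2)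
      ≤ ∫ t in (0:ℝ)..L, (deriv f t) ^ 2 := by
  have hπ := Real.pi_pos
  set c : ℝ := π / (2 * L) with hc_def
  have hc : 0 < c := div_pos hπ (by linarith)
  have hcL : c * L = π / 2 := by
    rw [hc_def]; field_simp
  set g : ℝ → ℝ := derivWithin f (Set.Icc 0 L) with hg_def
  have hgc : ContinuousOn g (Set.Icc 0 L) :=
    hf.continuousOn_derivWithin (uniqueDiffOn_Icc hL) le_rfl
  have hfc : ContinuousOn f (Set.Icc 0 L) := hf.continuousOn
  -- sin (c t) positive on (0, L]
  have hsin : ∀ t ∈ Set.Ioc (0:ℝ) L, 0 < Real.sin (c * t) := by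
    intro t ht
    apply Real.sin_pos_of_pos_of_lt_pi (mul_pos hc ht.1)
    have h1 : c * t ≤ c * L := by nlinarith [ht.2]
    nlinarith
  -- f has derivative g t at interior points
  have hfd : ∀ t ∈ Set.Ioo (0:ℝ) L, HasDerivAt f (g t) t := by
    intro t ht
    have hmem : Set.Icc (0:ℝ) L ∈ nhds t := Icc_mem_nhds ht.1 ht.2
    have h1 := (hf.differentiableOn one_ne_zero t (Set.Ioo_subset_Icc_self ht)).differentiableAt hmem
    have h2 : g t = deriv f t := by
      rw [hg_def]; exact derivWithin_of_mem_nhds hmem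
    rw [h2]; exact h1.hasDerivAt
  have hgderiv : ∀ t ∈ Set.Ioo (0:ℝ) L, deriv f t = g t := by
    intro t ht
    rw [hg_def]; exact (derivWithin_of_mem_nhds (Icc_mem_nhds ht.1 ht.2)).symm
  -- integrability
  have hIf2 : IntervalIntegrable (fun t => f t ^ 2) volume 0 L := by
    apply ContinuousOn.intervalIntegrable
    rw [Set.uIcc_of_le hL.le]; exact hfc.pow 2
  have hIg2 : IntervalIntegrable (fun t => g t ^ 2) volume 0 L := by
    apply ContinuousOn.intervalIntegrable
    rw [Set.uIcc_of_le hL.le]; exact hgc.pow 2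
  -- replace deriv f by g in the goal
  have hIeq : (∫ t in (0:ℝ)..L, (deriv f t) ^ 2) = ∫ t in (0:ℝ)..L, g t ^ 2 := by
    apply intervalIntegral.integral_congr_ae
    have hLne : ∀ᵐ x : ℝ ∂volume, x ≠ L := by
      rw [MeasureTheory.ae_iff]
      convert Real.volume_singleton (a := L) using 2
      ext x; simp
    filter_upwards [hLne] with x hx hmem
    rw [Set.uIoc_of_le hL.le] at hmem
    rw [hgderiv x ⟨hmem.1, lt_of_le_of_ne hmem.2 hx⟩]
  rw [hIeq]
  have hd0 : HasDerivWithinAt f (g 0) (Set.Icc 0 L) 0 :=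
    (hf.differentiableOn one_ne_zero 0 ⟨le_rfl, hL.le⟩).hasDerivWithinAt
  clear_value c g
  -- the auxiliary function F and its derivative
  set F : ℝ → ℝ := fun t => f t ^ 2 * (Real.cos (c * t) / Real.sin (c * t)) with hF_def
  set F' : ℝ → ℝ := fun t =>
    2 * f t * g t * (Real.cos (c * t) / Real.sin (c * t))
      - f t ^ 2 * (c / Real.sin (c * t) ^ 2) with hF'_def
  have hFW : ∀ t ∈ Set.Ioo (0:ℝ) L, HasDerivAt F (F' t) t := by
    intro t ht
    have hst : Real.sin (c * t) ≠ 0 := (hsin t ⟨ht.1, ht.2.le⟩).ne'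
    have hct : HasDerivAt (fun u : ℝ => c * u) c t := by
      simpa using (hasDerivAt_id t).const_mul c
    have hcos : HasDerivAt (fun u : ℝ => Real.cos (c * u)) (-Real.sin (c * t) * c) t :=
      (Real.hasDerivAt_cos (c * t)).comp t hct
    have hsin' : HasDerivAt (fun u : ℝ => Real.sin (c * u)) (Real.cos (c * t) * c) t :=
      (Real.hasDerivAt_sin (c * t)).comp t hct
    have hdiv := hcos.div hsin' hst
    have hpow := (hfd t ht).pow 2
    have hpy := Real.sin_sq_add_cos_sq (c * t)
    have hnum : -Real.sin (c * t) * c * Real.sin (c * t)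
        - Real.cos (c * t) * (Real.cos (c * t) * c) = -c := by
      linear_combination (-c) * hpy
    have hmul := hpow.mul hdiv
    rw [hnum] at hmul
    refine hmul.congr_deriv (Eq.symm ?_)
    simp only [hF'_def]
    simp only [pow_one, Nat.cast_ofNat, Pi.div_apply, Pi.pow_apply]
    field_simp
    ring
  -- main inequality for ε ∈ (0, L)
  have main : ∀ ε ∈ Set.Ioo (0:ℝ) L,
      c ^ 2 * (∫ t in ε..L, f t ^ 2) ≤ (∫ t in ε..L, g t ^ 2) + c * F ε := by
    intro ε hε
    have hεL : ε ≤ L := hε.2.le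
    have hsub : Set.Icc ε L ⊆ Set.Icc 0 L := Set.Icc_subset_Icc hε.1.le le_rfl
    have hsin_ne : ∀ t ∈ Set.Icc ε L, Real.sin (c * t) ≠ 0 := fun t htt =>
      (hsin t ⟨lt_of_lt_of_le hε.1 htt.1, htt.2⟩).ne'
    have hFcont : ContinuousOn F (Set.Icc ε L) := by
      apply ContinuousOn.mul ((hfc.mono hsub).pow 2)
      apply ContinuousOn.div
      · exact (Real.continuous_cos.comp (continuous_const.mul continuous_id)).continuousOn
      · exact (Real.continuous_sin.comp (continuous_const.mul continuous_id)).continuousOn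
      · exact hsin_ne
    have hF'cont : ContinuousOn F' (Set.Icc ε L) := by
      apply ContinuousOn.sub
      · apply ContinuousOn.mul
        · exact (continuousOn_const.mul (hfc.mono hsub)).mul (hgc.mono hsub)
        · apply ContinuousOn.div
          · exact (Real.continuous_cos.comp (continuous_const.mul continuous_id)).continuousOn
          · exact (Real.continuous_sin.comp (continuous_const.mul continuous_id)).continuousOn
          · exact hsin_ne
      · apply ContinuousOn.mul ((hfc.mono hsub).pow 2)
        apply ContinuousOn.div continuousOn_const
        · exact ((Real.continuous_sin.comp (continuous_const.mul continuous_id)).pow 2).continuousOn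
        · intro t htt; exact pow_ne_zero 2 (hsin_ne t htt)
    have hIF' : IntervalIntegrable F' volume ε L := by
      apply ContinuousOn.intervalIntegrable
      rwa [Set.uIcc_of_le hεL]
    -- FTC
    have hFTC : (∫ t in ε..L, F' t) = F L - F ε := by
      apply intervalIntegral.integral_eq_sub_of_hasDeriv_right_of_le hεL hFcont
      · intro t htt
        exact (hFW t ⟨lt_trans hε.1 htt.1, htt.2⟩).hasDerivWithinAt
      · exact hIF'
    have hFL : F L = 0 := by
      rw [hF_def]
      simp [hcL, Real.cos_pi_div_two]
    -- pointwise inequality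
    have hpt : ∀ t ∈ Set.Icc ε L, c ^ 2 * f t ^ 2 + c * F' t ≤ g t ^ 2 := by
      intro t htt
      have hs := hsin t ⟨lt_of_lt_of_le hε.1 htt.1, htt.2⟩
      have hpy := Real.sin_sq_add_cos_sq (c * t)
      simp only [hF'_def]
      have key : (c ^ 2 * f t ^ 2 + c * (2 * f t * g t * (Real.cos (c * t) / Real.sin (c * t))
          - f t ^ 2 * (c / Real.sin (c * t) ^ 2))) * Real.sin (c*t)^2 ≤ g t ^ 2 * Real.sin (c*t)^2 := by
        have expand : (c ^ 2 * f t ^ 2 + c * (2 * f t * g t * (Real.cos (c * t) / Real.sin (c * t))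
            - f t ^ 2 * (c / Real.sin (c * t) ^ 2))) * Real.sin (c*t)^2
            = c ^ 2 * f t ^ 2 * Real.sin (c*t)^2 + 2 * c * f t * g t * Real.cos (c*t) * Real.sin (c*t)
              - c ^ 2 * f t ^ 2 := by
          field_simp
          ring
        rw [expand]
        nlinarith [sq_nonneg (g t * Real.sin (c*t) - c * f t * Real.cos (c*t)), hpy, sq_nonneg (c * f t)]
      have := (mul_le_mul_iff_left₀ (by positivity : (0:ℝ) < Real.sin (c*t)^2)).mp key
      linarith
    -- integrate
    have hIf2' : IntervalIntegrable (fun t => f t ^ 2) volume ε L :=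
      hIf2.mono_set (by rw [Set.uIcc_of_le hεL, Set.uIcc_of_le hL.le]; exact hsub)
    have hIg2' : IntervalIntegrable (fun t => g t ^ 2) volume ε L :=
      hIg2.mono_set (by rw [Set.uIcc_of_le hεL, Set.uIcc_of_le hL.le]; exact hsub)
    have hmono : (∫ t in ε..L, (c ^ 2 * f t ^ 2 + c * F' t)) ≤ ∫ t in ε..L, g t ^ 2 := by
      apply intervalIntegral.integral_mono_on hεL _ hIg2' hpt
      exact ((hIf2'.const_mul _).add (hIF'.const_mul _))
    rw [intervalIntegral.integral_add (hIf2'.const_mul _) (hIF'.const_mul _),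
      intervalIntegral.integral_const_mul, intervalIntegral.integral_const_mul, hFTC, hFL] at hmono
    linarith
  -- now take limits as ε → 0⁺
  have hne : Filter.NeBot (nhdsWithin (0:ℝ) (Set.Ioo 0 L)) := by
    apply mem_closure_iff_nhdsWithin_neBot.mp
    rw [closure_Ioo hL.ne]
    exact ⟨le_rfl, hL.le⟩
  -- limit of tail integrals
  have htail : ∀ (h : ℝ → ℝ), IntervalIntegrable h volume 0 L → ContinuousOn h (Set.Icc 0 L) →
      Filter.Tendsto (fun ε => ∫ t in ε..L, h t) (nhdsWithin (0:ℝ) (Set.Ioo 0 L))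
        (nhds (∫ t in (0:ℝ)..L, h t)) := by
    intro h hint hcont
    obtain ⟨M, hM⟩ := IsCompact.exists_bound_of_continuousOn isCompact_Icc hcont
    have heq : ∀ ε ∈ Set.Ioo (0:ℝ) L,
        (∫ t in ε..L, h t) = (∫ t in (0:ℝ)..L, h t) - ∫ t in (0:ℝ)..ε, h t := by
      intro ε hε
      rw [eq_sub_iff_add_eq]
      rw [add_comm]
      have h1 : IntervalIntegrable h volume 0 ε := by
        apply hint.mono_set
        rw [Set.uIcc_of_le hε.1.le, Set.uIcc_of_le hL.le]
        exact Set.Icc_subset_Icc le_rfl hε.2.le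
      have h2 : IntervalIntegrable h volume ε L := by
        apply hint.mono_set
        rw [Set.uIcc_of_le hε.2.le, Set.uIcc_of_le hL.le]
        exact Set.Icc_subset_Icc hε.1.le le_rfl
      exact intervalIntegral.integral_add_adjacent_intervals h1 h2
    have hsmall : Filter.Tendsto (fun ε => ∫ t in (0:ℝ)..ε, h t)
        (nhdsWithin (0:ℝ) (Set.Ioo 0 L)) (nhds 0) := by
      apply squeeze_zero_norm' (a := fun ε => M * ε)
      · filter_upwards [self_mem_nhdsWithin] with ε hε
        have : ‖∫ t in (0:ℝ)..ε, h t‖ ≤ M * |ε - 0| := by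
          apply intervalIntegral.norm_integral_le_of_norm_le_const
          intro x hx
          rw [Set.uIoc_of_le hε.1.le] at hx
          exact hM x ⟨hx.1.le, hx.2.trans hε.2.le⟩
        simpa [abs_of_pos hε.1] using this
      · have : Filter.Tendsto (fun ε : ℝ => M * ε) (nhdsWithin (0:ℝ) (Set.Ioo 0 L))
            (nhds (M * 0)) := by
          apply Filter.Tendsto.mono_left (Filter.Tendsto.const_mul M Filter.tendsto_id) nhdsWithin_le_nhds
        simpa using this
    have := (tendsto_const_nhds (x := ∫ t in (0:ℝ)..L, h t)).sub hsmall
    rw [sub_zero] at this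
    apply this.congr'
    filter_upwards [self_mem_nhdsWithin] with ε hε
    exact (heq ε hε).symm
  -- limit of boundary term
  have hbdry : Filter.Tendsto (fun ε => c * F ε) (nhdsWithin (0:ℝ) (Set.Ioo 0 L)) (nhds 0) := by
    have hslopef : Filter.Tendsto (fun ε => f ε / ε) (nhdsWithin (0:ℝ) (Set.Ioo 0 L))
        (nhds (g 0)) := by
      have := hasDerivWithinAt_iff_tendsto_slope.mp hd0
      have hmono : nhdsWithin (0:ℝ) (Set.Ioo 0 L) ≤ nhdsWithin 0 (Set.Icc 0 L \ {0}) := by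
        apply nhdsWithin_mono
        intro x hx
        exact ⟨⟨hx.1.le, hx.2.le⟩, ne_of_gt hx.1⟩
      apply (this.mono_left hmono).congr'
      filter_upwards [self_mem_nhdsWithin] with ε hε
      simp [slope, hf0, div_eq_inv_mul]
    have hslopes : Filter.Tendsto (fun ε => ε / Real.sin (c * ε))
        (nhdsWithin (0:ℝ) (Set.Ioo 0 L)) (nhds (1 / c)) := by
      have hct : HasDerivAt (fun u : ℝ => Real.sin (c * u)) c 0 := by
        have h1 : HasDerivAt (fun u : ℝ => c * u) c 0 := by
          simpa using (hasDerivAt_id (0:ℝ)).const_mul c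
        have := (Real.hasDerivAt_sin (c * 0)).comp 0 h1
        simpa [Function.comp_def] using this
      have := hasDerivAt_iff_tendsto_slope.mp hct
      have hmono : nhdsWithin (0:ℝ) (Set.Ioo 0 L) ≤ nhdsWithin 0 {(0:ℝ)}ᶜ := by
        apply nhdsWithin_mono
        intro x hx
        exact ne_of_gt hx.1
      have hs := (this.mono_left hmono).inv₀ (ne_of_gt hc)
      rw [one_div]
      apply hs.congr'
      filter_upwards [self_mem_nhdsWithin] with ε hε
      simp [slope, div_eq_inv_mul, mul_comm]
    have hcos0 : Filter.Tendsto (fun ε => Real.cos (c * ε))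
        (nhdsWithin (0:ℝ) (Set.Ioo 0 L)) (nhds 1) := by
      have : Filter.Tendsto (fun ε : ℝ => Real.cos (c * ε)) (nhds 0) (nhds (Real.cos (c * 0))) :=
        (Real.continuous_cos.comp (continuous_const.mul continuous_id)).tendsto 0
      simpa using this.mono_left nhdsWithin_le_nhds
    have hid0 : Filter.Tendsto (fun ε : ℝ => ε) (nhdsWithin (0:ℝ) (Set.Ioo 0 L)) (nhds 0) :=
      Filter.tendsto_id.mono_left nhdsWithin_le_nhds
    have hF0 : Filter.Tendsto F (nhdsWithin (0:ℝ) (Set.Ioo 0 L)) (nhds 0) := by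
      have hprod := (((hslopef.mul hslopef).mul hcos0).mul hslopes).mul hid0
      rw [show (g 0 * g 0 * 1 * (1 / c) * 0 : ℝ) = 0 by ring] at hprod
      apply hprod.congr'
      filter_upwards [self_mem_nhdsWithin] with ε hε
      have hε0 : ε ≠ 0 := ne_of_gt hε.1
      have hsε : Real.sin (c * ε) ≠ 0 := (hsin ε ⟨hε.1, hε.2.le⟩).ne'
      rw [hF_def]
      field_simp
    have := hF0.const_mul c
    simpa using this
  -- conclude
  have hlhs : Filter.Tendsto (fun ε => c ^ 2 * ∫ t in ε..L, f t ^ 2)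
      (nhdsWithin (0:ℝ) (Set.Ioo 0 L)) (nhds (c ^ 2 * ∫ t in (0:ℝ)..L, f t ^ 2)) :=
    (htail _ hIf2 (hfc.pow 2)).const_mul _
  have hrhs : Filter.Tendsto (fun ε => (∫ t in ε..L, g t ^ 2) + c * F ε)
      (nhdsWithin (0:ℝ) (Set.Ioo 0 L)) (nhds ((∫ t in (0:ℝ)..L, g t ^ 2) + 0)) :=
    (htail _ hIg2 (hgc.pow 2)).add hbdry
  rw [add_zero] at hrhs
  apply le_of_tendsto_of_tendsto hlhs hrhs
  filter_upwards [self_mem_nhdsWithin] with ε hε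
  exact main ε hε
end

section
/- Let m > 0, a > 0, α ∈ ℝ. Among C² functions φ on [a,∞) with φ(a) = α and finite F(φ) = ∫_a^∞ (φ'(t)² + m²φ(t)²) t dt, the functional F is minimized by φ₀(t) = α·K₀(mt)/K₀(ma), and F(φ₀) = α²·ma·K₁(ma)/K₀(ma). -/
open Real MeasureTheory

/-- The modified Bessel function of the second kind, via its integral
representation `K_ν(ξ) = ∫_0^∞ e^{-ξ cosh t} cosh(νt) dt` (valid for `ξ > 0`). -/
noncomputable def besselK (ν ξ : ℝ) : ℝ :=
  ∫ t in Set.Ioi (0:ℝ), Real.exp (-ξ * Real.cosh t) * Real.cosh (ν * t)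

/-- The weighted energy functional `F(φ) = ∫_a^∞ (φ'(t)² + m²φ(t)²) t dt`. -/
noncomputable def Ffun (a m : ℝ) (φ : ℝ → ℝ) : ℝ :=
  ∫ t in Set.Ioi a, ((deriv φ t) ^ 2 + m ^ 2 * (φ t) ^ 2) * t

open Set Filter Metric

noncomputable def Kc (k : ℕ) (ξ : ℝ) : ℝ :=
  ∫ t in Set.Ioi (0:ℝ), Real.cosh t ^ k * Real.exp (-ξ * Real.cosh t)


lemma self_le_cosh (t : ℝ) : t ≤ Real.cosh t := by
  rcases le_or_gt t 0 with h | h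
  · exact h.trans (by positivity)
  · exact (Real.self_lt_sinh_iff.mpr h).le.trans (Real.sinh_lt_cosh t).le

lemma self_le_exp (x : ℝ) : x ≤ Real.exp x :=
  (le_add_of_nonneg_right zero_le_one).trans (Real.add_one_le_exp x)

-- master bound : cosh t ^ k * exp (-ξ cosh t) ≤ (2k/ξ)^k * exp (-(ξ/2) t)  for k ≥ 1
lemma pow_cosh_bound (ξ : ℝ) (hξ : 0 < ξ) (k : ℕ) (hk : 1 ≤ k) (t : ℝ) (ht : 0 ≤ t) :
    Real.cosh t ^ k * Real.exp (-ξ * Real.cosh t) ≤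
      (2*k/ξ)^k * Real.exp (-(ξ/2) * t) := by
  have hc : 0 < Real.cosh t := Real.cosh_pos t
  have hk' : (0:ℝ) < 2*k/ξ := by positivity
  have key : Real.cosh t ≤ (2*k/ξ) * Real.exp (ξ/(2*k) * Real.cosh t) := by
    have h1 : ξ/(2*k) * Real.cosh t ≤ Real.exp (ξ/(2*k) * Real.cosh t) := self_le_exp _
    have h2 : (0:ℝ) < ξ/(2*k) := by positivity
    calc Real.cosh t = (2*k/ξ) * (ξ/(2*k) * Real.cosh t) := by
          field_simp
    _ ≤ (2*k/ξ) * Real.exp (ξ/(2*k) * Real.cosh t) := by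
        exact mul_le_mul_of_nonneg_left h1 hk'.le
  calc Real.cosh t ^ k * Real.exp (-ξ * Real.cosh t)
      ≤ ((2*k/ξ) * Real.exp (ξ/(2*k) * Real.cosh t)) ^ k * Real.exp (-ξ * Real.cosh t) := by
        gcongr
    _ = (2*k/ξ)^k * (Real.exp (ξ/(2*k) * Real.cosh t) ^ k * Real.exp (-ξ * Real.cosh t)) := by
        rw [mul_pow]; ring
    _ = (2*k/ξ)^k * Real.exp (-(ξ/2) * Real.cosh t) := by
        rw [← Real.exp_nat_mul, ← Real.exp_add]
        congr 2
        have : (k:ℝ) ≠ 0 := by positivity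
        field_simp
        ring
    _ ≤ (2*k/ξ)^k * Real.exp (-(ξ/2) * t) := by
        refine mul_le_mul_of_nonneg_left (Real.exp_le_exp.mpr ?_) (by positivity)
        have := self_le_cosh t
        nlinarith
lemma cosh_pow_bound' (ξ : ℝ) (hξ : 0 < ξ) (k : ℕ) (t : ℝ) (ht : 0 ≤ t) :
    Real.cosh t ^ k * Real.exp (-ξ * Real.cosh t) ≤
      (2*((k:ℝ)+1)/ξ)^(k+1) * Real.exp (-(ξ/2) * t) := by
  have hb := pow_cosh_bound ξ hξ (k+1) (by omega) t ht
  push_cast at hb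
  refine le_trans ?_ hb
  have : Real.cosh t ^ k ≤ Real.cosh t ^ (k+1) :=
    pow_le_pow_right₀ (Real.one_le_cosh t) (Nat.le_succ k)
  exact mul_le_mul_of_nonneg_right this (Real.exp_pos _).le

lemma intKc (ξ : ℝ) (hξ : 0 < ξ) (k : ℕ) :
    IntegrableOn (fun t => Real.cosh t ^ k * Real.exp (-ξ * Real.cosh t)) (Set.Ioi (0:ℝ)) := by
  refine Integrable.mono' (((exp_neg_integrableOn_Ioi 0 (by positivity : (0:ℝ) < ξ/2)).const_mul
    ((2*((k:ℝ)+1)/ξ)^(k+1)))) ?_ ?_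
  · exact (Continuous.aestronglyMeasurable (by continuity)).restrict
  · filter_upwards [ae_restrict_mem measurableSet_Ioi] with t ht
    rw [Real.norm_eq_abs, abs_of_nonneg (by positivity)]
    have := cosh_pow_bound' ξ hξ k t (le_of_lt ht)
    simpa [neg_mul, mul_comm] using this

lemma Kc_pos (ξ : ℝ) (hξ : 0 < ξ) (k : ℕ) : 0 < Kc k ξ := by
  rw [Kc, setIntegral_pos_iff_support_of_nonneg_ae]
  · have : Function.support (fun t => Real.cosh t ^ k * Real.exp (-ξ * Real.cosh t)) = Set.univ := by
      ext t
      simp only [Function.mem_support, Set.mem_univ, iff_true]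
      positivity
    rw [this]
    simp [Set.univ_inter]
  · filter_upwards with t
    positivity
  · exact intKc ξ hξ k

lemma Kc_le_Kc (ξ : ℝ) (hξ : 0 < ξ) : Kc 0 ξ ≤ Kc 1 ξ := by
  refine setIntegral_mono_on (intKc ξ hξ 0) (intKc ξ hξ 1) measurableSet_Ioi ?_
  intro t _
  have h1 : (1:ℝ) ≤ Real.cosh t := Real.one_le_cosh t
  have := (Real.exp_pos (-ξ * Real.cosh t)).le
  nlinarith

lemma integral_exp_neg_mul_Ioi_zero {b : ℝ} (hb : 0 < b) :
    (∫ t in Set.Ioi (0:ℝ), Real.exp (-(b * t))) = 1/b := by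
  have := integral_comp_mul_left_Ioi (fun x => Real.exp (-x)) 0 hb
  simp only [mul_zero] at this
  rw [show (fun t => Real.exp (-(b*t))) = (fun t => Real.exp (-(b*t))) from rfl]
  calc (∫ t in Set.Ioi (0:ℝ), Real.exp (-(b * t))) = b⁻¹ • ∫ x in Set.Ioi (0:ℝ), Real.exp (-x) := this
    _ = 1/b := by rw [integral_exp_neg_Ioi_zero]; simp [one_div]

lemma Kc_le (ξ : ℝ) (hξ : 0 < ξ) (k : ℕ) (hk : 1 ≤ k) :
    Kc k ξ ≤ (2*k/ξ)^k * (2/ξ) := by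
  have h := setIntegral_mono_on (intKc ξ hξ k)
    (((exp_neg_integrableOn_Ioi 0 (by positivity : (0:ℝ) < ξ/2)).const_mul ((2*k/ξ)^k)))
    measurableSet_Ioi (fun t ht => by
      have := pow_cosh_bound ξ hξ k hk t (le_of_lt ht)
      simpa [neg_mul, mul_comm] using this)
  refine h.trans ?_
  rw [MeasureTheory.integral_const_mul]
  have : (∫ t in Set.Ioi (0:ℝ), Real.exp (-(ξ/2 * t))) = 1/(ξ/2) :=
    integral_exp_neg_mul_Ioi_zero (by positivity)
  rw [show (fun t => Real.exp (-(ξ/2) * t)) = (fun t => Real.exp (-(ξ/2 * t))) by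
    funext t; ring_nf, this]
  apply le_of_eq
  field_simp

lemma hasDerivAt_Kc (k : ℕ) (ξ : ℝ) (hξ : 0 < ξ) :
    HasDerivAt (Kc k) (-(Kc (k+1) ξ)) ξ := by
  have hmain := hasDerivAt_integral_of_dominated_loc_of_deriv_le
    (F := fun x t => Real.cosh t ^ k * Real.exp (-x * Real.cosh t))
    (F' := fun x t => -(Real.cosh t ^ (k+1) * Real.exp (-x * Real.cosh t)))
    (x₀ := ξ) (s := Metric.ball ξ (ξ/2))
    (μ := volume.restrict (Set.Ioi (0:ℝ)))
    (bound := fun t => (2*(((k+1:ℕ):ℝ)+1)/(ξ/2))^(k+1+1) * Real.exp (-(ξ/4) * t))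
    (Metric.ball_mem_nhds _ (by positivity))
    (by filter_upwards with x
        exact (Continuous.aestronglyMeasurable (by continuity)).restrict)
    ((intKc ξ hξ k))
    ((Continuous.aestronglyMeasurable (by continuity)).restrict.neg)
    ?_ ?_ ?_
  · have : (∫ t in Set.Ioi (0:ℝ), -(Real.cosh t ^ (k+1) * Real.exp (-ξ * Real.cosh t)))
        = -(Kc (k+1) ξ) := by
      rw [integral_neg]; rfl
    rw [← this]
    exact hmain.2
  · -- bound
    filter_upwards [ae_restrict_mem measurableSet_Ioi] with t ht x hx
    rw [Real.norm_eq_abs, abs_neg, abs_of_nonneg (by positivity)]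
    have hx2 : ξ/2 < x := by
      rw [mem_ball, Real.dist_eq, abs_lt] at hx
      linarith [hx.1]
    have h1 : Real.cosh t ^ (k+1) * Real.exp (-x * Real.cosh t)
        ≤ Real.cosh t ^ (k+1) * Real.exp (-(ξ/2) * Real.cosh t) := by
      have hc : 0 < Real.cosh t := Real.cosh_pos t
      have hle : -x * Real.cosh t ≤ -(ξ/2) * Real.cosh t := by nlinarith
      exact mul_le_mul_of_nonneg_left (Real.exp_le_exp.mpr hle) (by positivity)
    refine h1.trans ?_
    have := cosh_pow_bound' (ξ/2) (by positivity) (k+1) t ht.le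
    have h4 : ξ/2/2 = ξ/4 := by ring
    rw [h4] at this
    exact this
  · exact ((exp_neg_integrableOn_Ioi 0 (by positivity : (0:ℝ) < ξ/4)).const_mul _)
  · filter_upwards with t x hx
    have : HasDerivAt (fun x : ℝ => Real.exp (-x * Real.cosh t)) (-Real.cosh t * Real.exp (-x * Real.cosh t)) x := by
      have h := (Real.hasDerivAt_exp (-x * Real.cosh t)).comp x
        (((hasDerivAt_id x).neg).mul_const (Real.cosh t))
      simpa [Function.comp_def, mul_comm] using h
    have h2 := this.const_mul (Real.cosh t ^ k)
    refine h2.congr_deriv (Eq.symm ?_)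
    ring

-- tendsto: cosh t * exp (-ξ cosh t) → 0 at top
lemma tendsto_cosh_exp (ξ : ℝ) (hξ : 0 < ξ) :
    Tendsto (fun t => Real.sinh t * Real.exp (-ξ * Real.cosh t)) atTop (nhds 0) := by
  have h1 : Tendsto (fun t : ℝ => (2*1/ξ)^1 * Real.exp (-(ξ/2) * t)) atTop (nhds 0) := by
    rw [show (0:ℝ) = (2*1/ξ)^1 * 0 by ring]
    exact (tendsto_exp_atBot.comp (tendsto_id.const_mul_atTop_of_neg (by linarith))).const_mul _
  refine squeeze_zero' ?_ ?_ h1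
  · filter_upwards [eventually_ge_atTop 0] with t ht
    have := (Real.sinh_nonneg_iff).mpr ht
    positivity
  · filter_upwards [eventually_ge_atTop 0] with t ht
    have hb := pow_cosh_bound ξ hξ 1 le_rfl t ht
    push_cast at hb
    refine le_trans ?_ hb
    have h2 : Real.sinh t ≤ Real.cosh t := (Real.sinh_lt_cosh t).le
    have he := (Real.exp_pos (-ξ * Real.cosh t)).le
    rw [pow_one]
    nlinarith

lemma bessel_identity (ξ : ℝ) (hξ : 0 < ξ) :
    ξ * Kc 2 ξ = Kc 1 ξ + ξ * Kc 0 ξ := by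
  -- h(t) = sinh t * exp(-ξ cosh t); ∫_{Ioi 0} h' = 0 - h 0 = 0
  set h : ℝ → ℝ := fun t => Real.sinh t * Real.exp (-ξ * Real.cosh t) with hh
  set h' : ℝ → ℝ := fun t =>
    Real.cosh t * Real.exp (-ξ * Real.cosh t)
      + ξ * Real.exp (-ξ * Real.cosh t) - ξ * (Real.cosh t ^ 2 * Real.exp (-ξ * Real.cosh t)) with hh'
  have hderiv : ∀ t : ℝ, HasDerivAt h (h' t) t := by
    intro t
    have he : HasDerivAt (fun t : ℝ => Real.exp (-ξ * Real.cosh t))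
        (-ξ * Real.sinh t * Real.exp (-ξ * Real.cosh t)) t := by
      have := (Real.hasDerivAt_exp (-ξ * Real.cosh t)).comp t
        ((Real.hasDerivAt_cosh t).const_mul (-ξ))
      simpa [Function.comp_def, mul_comm, mul_assoc, mul_left_comm] using this
    have := (Real.hasDerivAt_sinh t).mul he
    refine this.congr_deriv (Eq.symm ?_)
    have hs : Real.sinh t ^ 2 = Real.cosh t ^ 2 - 1 := by
      have := Real.cosh_sq_sub_sinh_sq t
      nlinarith
    simp only [hh']
    linear_combination (ξ * Real.exp (-ξ * Real.cosh t)) * hs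
  have i1 : IntegrableOn (fun t => Real.cosh t * Real.exp (-ξ * Real.cosh t)) (Set.Ioi (0:ℝ)) := by
    simpa using intKc ξ hξ 1
  have i0 : IntegrableOn (fun t => Real.exp (-ξ * Real.cosh t)) (Set.Ioi (0:ℝ)) := by
    simpa using intKc ξ hξ 0
  have i0' : IntegrableOn (fun t => ξ * Real.exp (-ξ * Real.cosh t)) (Set.Ioi (0:ℝ)) :=
    i0.const_mul ξ
  have i2 : IntegrableOn (fun t => ξ * (Real.cosh t ^ 2 * Real.exp (-ξ * Real.cosh t))) (Set.Ioi (0:ℝ)) :=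
    (intKc ξ hξ 2).const_mul ξ
  have hint : IntegrableOn h' (Set.Ioi (0:ℝ)) := (i1.add i0').sub i2
  have htend : Tendsto h atTop (nhds 0) := tendsto_cosh_exp ξ hξ
  have := integral_Ioi_of_hasDerivAt_of_tendsto
    (f := h) (f' := h') (a := 0)
    (hderiv 0).continuousAt.continuousWithinAt
    (fun x _ => hderiv x) hint htend
  have h0 : h 0 = 0 := by simp [hh]
  rw [h0, sub_zero] at this
  have hsplit : ∫ t in Set.Ioi (0:ℝ), h' t
      = Kc 1 ξ + ξ * Kc 0 ξ - ξ * Kc 2 ξ := by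
    have e1 : (∫ t in Set.Ioi (0:ℝ), h' t)
        = (∫ t in Set.Ioi (0:ℝ), (Real.cosh t * Real.exp (-ξ * Real.cosh t) + ξ * Real.exp (-ξ * Real.cosh t)))
          - ∫ t in Set.Ioi (0:ℝ), ξ * (Real.cosh t ^ 2 * Real.exp (-ξ * Real.cosh t)) :=
      integral_sub (i1.add i0') i2
    have e2 : (∫ t in Set.Ioi (0:ℝ), (Real.cosh t * Real.exp (-ξ * Real.cosh t) + ξ * Real.exp (-ξ * Real.cosh t)))
        = (∫ t in Set.Ioi (0:ℝ), Real.cosh t * Real.exp (-ξ * Real.cosh t))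
          + ∫ t in Set.Ioi (0:ℝ), ξ * Real.exp (-ξ * Real.cosh t) := integral_add i1 i0'
    rw [e1, e2, integral_const_mul, integral_const_mul]
    simp only [Kc, pow_one, pow_zero, one_mul]
  rw [hsplit] at this
  linarith

lemma besselK_zero_eq (ξ : ℝ) : besselK 0 ξ = Kc 0 ξ := by
  simp [besselK, Kc]
lemma besselK_one_eq (ξ : ℝ) : besselK 1 ξ = Kc 1 ξ := by
  simp only [besselK, Kc, one_mul, pow_one]
  congr 1
  funext t
  ring

-- the key bundle of facts about φ₀
lemma Kc1_bound (ξ : ℝ) (hξ : 0 < ξ) : Kc 1 ξ ≤ 4/ξ^2 := by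
  have := Kc_le ξ hξ 1 le_rfl
  push_cast at this
  calc Kc 1 ξ ≤ (2*1/ξ)^1 * (2/ξ) := this
    _ = 4/ξ^2 := by field_simp; ring

set_option maxHeartbeats 1000000 in
theorem value_lemma (m a α : ℝ) (hm : 0 < m) (ha : 0 < a) (φ₀ : ℝ → ℝ)
    (hφ₀ : ∀ t, φ₀ t = (α / Kc 0 (m * a)) * Kc 0 (m * t)) :
    (∀ t ∈ Set.Ioi a, HasDerivAt φ₀ (-((α / Kc 0 (m*a)) * m * Kc 1 (m*t))) t) ∧
    IntegrableOn (fun t => ((-((α / Kc 0 (m*a)) * m * Kc 1 (m*t))) ^ 2 + m ^ 2 * (φ₀ t) ^ 2) * t) (Set.Ioi a) ∧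
    (∫ t in Set.Ioi a, ((-((α / Kc 0 (m*a)) * m * Kc 1 (m*t))) ^ 2 + m ^ 2 * (φ₀ t) ^ 2) * t)
      = α ^ 2 * m * a * Kc 1 (m * a) / Kc 0 (m * a) := by
  set c := α / Kc 0 (m*a) with hc
  have hφ₀f : φ₀ = fun t => c * Kc 0 (m*t) := funext hφ₀
  set p : ℝ → ℝ := fun t => -(c * m * Kc 1 (m*t)) with hp
  -- derivative of φ₀
  have hderiv : ∀ t : ℝ, 0 < t → HasDerivAt φ₀ (p t) t := by
    intro t ht
    rw [hφ₀f]
    have hin : HasDerivAt (fun y : ℝ => m * y) m t := by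
      simpa using (hasDerivAt_id t).const_mul m
    have h1 : HasDerivAt (fun t : ℝ => Kc 0 (m*t)) (-(Kc 1 (m*t)) * m) t :=
      (hasDerivAt_Kc 0 (m*t) (by positivity)).comp t hin
    have := h1.const_mul c
    refine this.congr_deriv (Eq.symm ?_)
    simp [hp]; ring
  -- derivative of p
  have hderivp : ∀ t : ℝ, 0 < t → HasDerivAt p (c * m^2 * Kc 2 (m*t)) t := by
    intro t ht
    have hin : HasDerivAt (fun y : ℝ => m * y) m t := by
      simpa using (hasDerivAt_id t).const_mul m
    have h1 : HasDerivAt (fun t : ℝ => Kc 1 (m*t)) (-(Kc 2 (m*t)) * m) t :=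
      (hasDerivAt_Kc 1 (m*t) (by positivity)).comp t hin
    have := (h1.const_mul (c*m)).neg
    refine this.congr_deriv (Eq.symm ?_)
    ring
  -- G and its derivative
  set G : ℝ → ℝ := fun t => t * φ₀ t * p t with hG
  have hGderiv : ∀ t : ℝ, 0 < t → HasDerivAt G (((p t)^2 + m^2*(φ₀ t)^2) * t) t := by
    intro t ht
    have h1 := ((hasDerivAt_id t).mul (hderiv t ht)).mul (hderivp t ht)
    refine h1.congr_deriv (Eq.symm ?_)
    have hode : t * (c * m^2 * Kc 2 (m*t)) + p t = m^2 * t * φ₀ t := by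
      have hbi := bessel_identity (m*t) (by positivity)
      rw [hφ₀ t]
      show t * (c * m^2 * Kc 2 (m*t)) + -(c * m * Kc 1 (m*t)) = m^2 * t * (c * Kc 0 (m*t))
      linear_combination (c*m) * hbi
    simp only [id_eq, one_mul, Pi.mul_apply]
    linear_combination (-(φ₀ t)) * hode
  have hGderiv' : ∀ t : ℝ, 0 < t →
      HasDerivAt G (((-(c * m * Kc 1 (m*t)))^2 + m^2*(φ₀ t)^2) * t) t := by
    intro t ht
    have := hGderiv t ht
    simpa only [hp] using this
  -- bound and tendsto for G
  have hGbound : ∀ t : ℝ, 0 < t → ‖G t‖ ≤ (16 * c^2 / m^3) * (1/t^3) := by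
    intro t ht
    have hmt : 0 < m*t := by positivity
    have h0 : 0 < Kc 0 (m*t) := Kc_pos _ hmt 0
    have h1 : 0 < Kc 1 (m*t) := Kc_pos _ hmt 1
    have h01 : Kc 0 (m*t) ≤ Kc 1 (m*t) := Kc_le_Kc _ hmt
    have hb : Kc 1 (m*t) ≤ 4/(m*t)^2 := Kc1_bound _ hmt
    have hGt : G t = -(t * c^2 * m * Kc 0 (m*t) * Kc 1 (m*t)) := by
      simp only [hG, hφ₀ t, hp]
      ring
    rw [hGt, norm_neg, Real.norm_eq_abs, abs_of_nonneg (by positivity)]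
    calc t * c^2 * m * Kc 0 (m*t) * Kc 1 (m*t)
        ≤ t * c^2 * m * (4/(m*t)^2) * (4/(m*t)^2) := by
          gcongr
          exact h01.trans hb
      _ = 16 * c^2 / m^3 * (1/t^3) := by field_simp; ring
  have htendG : Tendsto G atTop (nhds 0) := by
    refine squeeze_zero_norm' (a := fun t : ℝ => 16 * c^2/m^3 * (1/t^3)) ?_ ?_
    · filter_upwards [eventually_gt_atTop 0] with t ht
      exact hGbound t ht
    · have h3 : Tendsto (fun t : ℝ => t^3) atTop atTop := tendsto_pow_atTop (by norm_num)
      have := (h3.inv_tendsto_atTop).const_mul (16 * c^2 / m^3)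
      simpa [one_div, mul_zero] using this
  have hnn : ∀ x ∈ Set.Ioi a, 0 ≤ ((-(c * m * Kc 1 (m*x)))^2 + m^2*(φ₀ x)^2) * x :=
    fun x hx => mul_nonneg (by positivity) (le_of_lt (ha.trans hx))
  have hcont : ContinuousWithinAt G (Set.Ici a) a :=
    (hGderiv' a ha).continuousAt.continuousWithinAt
  have hderivIoi : ∀ x ∈ Set.Ioi a,
      HasDerivAt G (((-(c * m * Kc 1 (m*x)))^2 + m^2*(φ₀ x)^2) * x) x :=
    fun x hx => hGderiv' x (ha.trans hx)
  have hint := integrableOn_Ioi_deriv_of_nonneg hcont hderivIoi hnn htendG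
  have hval := integral_Ioi_of_hasDerivAt_of_nonneg hcont hderivIoi hnn htendG
  have hK0 : Kc 0 (m*a) ≠ 0 := (Kc_pos (m*a) (by positivity) 0).ne'
  have hGa : G a = -(α^2 * m * a * Kc 1 (m*a) / Kc 0 (m*a)) := by
    simp only [hG, hφ₀ a, hp, hc]
    field_simp
    try ring
    try exact Or.inl trivial
  refine ⟨fun t ht => hderiv t (ha.trans ht), hint, ?_⟩
  rw [hval, hGa]
  ring



-- continuity of the building blocks
lemma contOn_Kc1 (m a : ℝ) (hm : 0 < m) (ha : 0 < a) :
    ContinuousOn (fun t => Kc 1 (m * t)) (Set.Ici a) := by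
  intro t ht
  have ht' : 0 < t := lt_of_lt_of_le ha ht
  have h1 : ContinuousAt (Kc 1) (m*t) := (hasDerivAt_Kc 1 (m*t) (by positivity)).continuousAt
  exact (h1.comp ((continuous_const.mul continuous_id).continuousAt)).continuousWithinAt

lemma contOn_Kc0 (m a : ℝ) (hm : 0 < m) (ha : 0 < a) :
    ContinuousOn (fun t => Kc 0 (m * t)) (Set.Ici a) := by
  intro t ht
  have ht' : 0 < t := lt_of_lt_of_le ha ht
  have h1 : ContinuousAt (Kc 0) (m*t) := (hasDerivAt_Kc 0 (m*t) (by positivity)).continuousAt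
  exact (h1.comp ((continuous_const.mul continuous_id).continuousAt)).continuousWithinAt

set_option maxHeartbeats 2000000 in
theorem main_lemma (m a α : ℝ) (hm : 0 < m) (ha : 0 < a) (φ₀ : ℝ → ℝ)
    (hφ₀ : ∀ t, φ₀ t = (α / Kc 0 (m * a)) * Kc 0 (m * t)) :
    Ffun a m φ₀ = α ^ 2 * m * a * Kc 1 (m * a) / Kc 0 (m * a) ∧
      ∀ φ : ℝ → ℝ, ContDiffOn ℝ 2 φ (Set.Ici a) → φ a = α →
        IntegrableOn (fun t => ((deriv φ t) ^ 2 + m ^ 2 * (φ t) ^ 2) * t) (Set.Ioi a) →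
        Ffun a m φ₀ ≤ Ffun a m φ := by
  obtain ⟨hd0, hint0, hval0⟩ := value_lemma m a α hm ha φ₀ hφ₀
  set c := α / Kc 0 (m*a) with hc
  set p : ℝ → ℝ := fun t => -(c * m * Kc 1 (m*t)) with hp
  set I0 : ℝ → ℝ := fun t => ((p t)^2 + m^2*(φ₀ t)^2) * t with hI0
  have hK0 : (0:ℝ) < Kc 0 (m*a) := Kc_pos (m*a) (by positivity) 0
  have hφ₀a : φ₀ a = α := by rw [hφ₀ a, hc]; field_simp
  -- Ffun φ₀ = ∫ I0
  have hFeq : Ffun a m φ₀ = ∫ t in Set.Ioi a, I0 t := by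
    refine setIntegral_congr_fun measurableSet_Ioi (fun t ht => ?_)
    rw [(hd0 t ht).deriv]
  have hFval : Ffun a m φ₀ = α ^ 2 * m * a * Kc 1 (m * a) / Kc 0 (m * a) := by
    rw [hFeq]; exact hval0
  refine ⟨hFval, ?_⟩
  intro φ hφC2 hφa hφint
  set q : ℝ → ℝ := deriv φ with hq
  set Iφ : ℝ → ℝ := fun t => ((q t)^2 + m^2*(φ t)^2) * t with hIφ
  set ψ : ℝ → ℝ := fun t => φ t - φ₀ t with hψ
  set Iψ : ℝ → ℝ := fun t => ((q t - p t)^2 + m^2*(ψ t)^2) * t with hIψ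
  set X : ℝ → ℝ := fun t => (p t * (q t - p t) + m^2 * φ₀ t * ψ t) * t with hX
  -- derivative of φ on Ioi a
  have hφdiff : ∀ t ∈ Set.Ioi a, HasDerivAt φ (q t) t := by
    intro t ht
    have hD : DifferentiableOn ℝ φ (Set.Ici a) := hφC2.differentiableOn (by norm_num)
    have : DifferentiableAt ℝ φ t :=
      (hD t (Set.mem_Ici.mpr (le_of_lt ht))).differentiableAt (Ici_mem_nhds ht)
    exact this.hasDerivAt
  -- measurability bits
  have mq : AEStronglyMeasurable q (volume.restrict (Set.Ioi a)) :=
    (measurable_deriv φ).aestronglyMeasurable.restrict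
  have mφ : AEStronglyMeasurable φ (volume.restrict (Set.Ioi a)) :=
    ((hφC2.continuousOn.mono (Set.Ioi_subset_Ici le_rfl)).aestronglyMeasurable measurableSet_Ioi)
  have mp : AEStronglyMeasurable p (volume.restrict (Set.Ioi a)) := by
    refine ContinuousOn.aestronglyMeasurable ?_ measurableSet_Ioi
    exact ((continuousOn_const.mul (contOn_Kc1 m a hm ha)).neg).mono (Set.Ioi_subset_Ici le_rfl)
  have mφ₀ : AEStronglyMeasurable φ₀ (volume.restrict (Set.Ioi a)) := by
    refine ContinuousOn.aestronglyMeasurable ?_ measurableSet_Ioi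
    have : ContinuousOn (fun t => c * Kc 0 (m*t)) (Set.Ici a) :=
      continuousOn_const.mul (contOn_Kc0 m a hm ha)
    exact (this.congr (fun t _ => hφ₀ t)).mono (Set.Ioi_subset_Ici le_rfl)
  have mid : AEStronglyMeasurable (fun t : ℝ => t) (volume.restrict (Set.Ioi a)) :=
    aestronglyMeasurable_id
  have mψ : AEStronglyMeasurable ψ (volume.restrict (Set.Ioi a)) := mφ.sub mφ₀
  have mIψ : AEStronglyMeasurable Iψ (volume.restrict (Set.Ioi a)) := by
    apply AEStronglyMeasurable.mul _ mid
    apply AEStronglyMeasurable.add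
    · simp only [pow_two]
      exact (mq.sub mp).mul (mq.sub mp)
    · apply aestronglyMeasurable_const.mul
      simp only [pow_two]
      exact mψ.mul mψ
  have mX : AEStronglyMeasurable X (volume.restrict (Set.Ioi a)) := by
    apply AEStronglyMeasurable.mul _ mid
    exact (mp.mul (mq.sub mp)).add (((aestronglyMeasurable_const.mul mφ₀)).mul mψ)
  -- integrability of Iψ and X
  have hIψ_int : IntegrableOn Iψ (Set.Ioi a) := by
    refine Integrable.mono' ((hφint.add hint0).const_mul 2) mIψ ?_
    filter_upwards [ae_restrict_mem measurableSet_Ioi] with t ht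
    have ht' : 0 < t := ha.trans ht
    rw [Real.norm_eq_abs, abs_of_nonneg (by positivity)]
    simp only [hIψ, hIφ, hI0, hψ, Pi.add_apply]
    nlinarith [mul_nonneg (sq_nonneg (q t + p t)) ht'.le,
      mul_nonneg (mul_nonneg (sq_nonneg m) (sq_nonneg (φ t + φ₀ t))) ht'.le]
  have hX_int : IntegrableOn X (Set.Ioi a) := by
    refine Integrable.mono' ((hint0.add hIψ_int).const_mul (1/2 : ℝ)) mX ?_
    filter_upwards [ae_restrict_mem measurableSet_Ioi] with t ht
    have ht' : 0 < t := ha.trans ht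
    rw [Real.norm_eq_abs, abs_le]
    constructor
    · simp only [hX, hI0, hIψ, hψ, Pi.add_apply]
      nlinarith [mul_nonneg (sq_nonneg (q t)) ht'.le,
        mul_nonneg (mul_nonneg (sq_nonneg m) (sq_nonneg (φ t))) ht'.le]
    · simp only [hX, hI0, hIψ, hψ, Pi.add_apply]
      have e : 1/2*((p t^2 + m^2*φ₀ t^2)*t + ((q t - p t)^2 + m^2*(φ t - φ₀ t)^2)*t)
          - (p t*(q t - p t) + m^2*φ₀ t*(φ t - φ₀ t))*t
          = 1/2*((2*p t - q t)^2*t + m^2*(2*φ₀ t - φ t)^2*t) := by ring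
      nlinarith [mul_nonneg (sq_nonneg (2*p t - q t)) ht'.le,
        mul_nonneg (mul_nonneg (sq_nonneg m) (sq_nonneg (2*φ₀ t - φ t))) ht'.le, e]
  -- splitting the integral
  have hsplit : Ffun a m φ = (∫ t in Set.Ioi a, I0 t) + (∫ t in Set.Ioi a, Iψ t)
      + 2 * ∫ t in Set.Ioi a, X t := by
    have hpt : ∀ t, Iφ t = I0 t + Iψ t + 2 * X t := by
      intro t
      simp only [hIφ, hI0, hIψ, hX, hψ]
      ring
    have h1 : Ffun a m φ = ∫ t in Set.Ioi a, Iφ t := rfl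
    rw [h1]
    rw [show Iφ = fun t => (I0 t + Iψ t) + 2 * X t by funext t; rw [hpt t]]
    have h12 : IntegrableOn (fun t => I0 t + Iψ t) (Set.Ioi a) := Integrable.add hint0 hIψ_int
    rw [integral_add h12 (hX_int.const_mul 2), integral_add hint0 hIψ_int, integral_const_mul]
  -- ∫ X = 0
  have hXzero : (∫ t in Set.Ioi a, X t) = 0 := by
    rcases eq_or_ne c 0 with hc0 | hc0
    · have hXz : Set.EqOn X (fun _ => (0:ℝ)) (Set.Ioi a) := by
        intro t ht
        simp only [hX, hp, hψ, hφ₀ t, hc0]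
        ring
      rw [setIntegral_congr_fun measurableSet_Ioi hXz]
      simp
    · -- A T → ∫ X  and  A T → 0 forced by integrability
      set A : ℝ → ℝ := fun t => t * p t * ψ t with hA
      have hψa : ψ a = 0 := by simp [hψ, hφa, hφ₀a]
      have hAa : A a = 0 := by simp [hA, hψa]
      have hAderiv : ∀ t ∈ Set.Ioi a, HasDerivAt A (X t) t := by
        intro t ht
        have ht' : 0 < t := ha.trans ht
        have hψd : HasDerivAt ψ (q t - p t) t := (hφdiff t ht).sub (hd0 t ht)
        have hin : HasDerivAt (fun y : ℝ => m * y) m t := by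
          simpa using (hasDerivAt_id t).const_mul m
        have hKd : HasDerivAt (fun t : ℝ => Kc 1 (m*t)) (-(Kc 2 (m*t)) * m) t :=
          (hasDerivAt_Kc 1 (m*t) (by positivity)).comp t hin
        have hpd : HasDerivAt p (c * m^2 * Kc 2 (m*t)) t := by
          have := (hKd.const_mul (c*m)).neg
          refine this.congr_deriv (Eq.symm ?_)
          ring
        have h1 := ((hasDerivAt_id t).mul hpd).mul hψd
        have hode : t * (c * m^2 * Kc 2 (m*t)) + p t = m^2 * t * φ₀ t := by
          have hbi := bessel_identity (m*t) (by positivity)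
          rw [hφ₀ t]
          show t * (c * m^2 * Kc 2 (m*t)) + -(c * m * Kc 1 (m*t)) = m^2 * t * (c * Kc 0 (m*t))
          linear_combination (c*m) * hbi
        refine h1.congr_deriv (Eq.symm ?_)
        simp only [hX, hA, id_eq, one_mul, Pi.mul_apply]
        linear_combination (-(ψ t)) * hode
      have hcontA : ContinuousOn A (Set.Ici a) := by
        have h1 : ContinuousOn p (Set.Ici a) :=
          (continuousOn_const.mul (contOn_Kc1 m a hm ha)).neg
        have h2 : ContinuousOn φ₀ (Set.Ici a) := by
          have hbase : ContinuousOn (fun t : ℝ => c * Kc 0 (m*t)) (Set.Ici a) :=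
            continuousOn_const.mul (contOn_Kc0 m a hm ha)
          exact hbase.congr (fun t _ => hφ₀ t)
        exact (continuousOn_id.mul h1).mul ((hφC2.continuousOn).sub h2)
      have hFTC : ∀ T, a ≤ T → (∫ t in a..T, X t) = A T := by
        intro T hT
        rw [intervalIntegral.integral_eq_sub_of_hasDeriv_right_of_le hT
          (hcontA.mono (Set.Icc_subset_Ici_self))
          (fun x hx => (hAderiv x hx.1).hasDerivWithinAt)
          ((intervalIntegrable_iff_integrableOn_Ioc_of_le hT).mpr
            (hX_int.mono_set Set.Ioc_subset_Ioi_self)), hAa, sub_zero]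
      have hAtend : Tendsto A atTop (nhds (∫ t in Set.Ioi a, X t)) := by
        have h1 := intervalIntegral_tendsto_integral_Ioi a hX_int tendsto_id
        refine h1.congr' ?_
        filter_upwards [eventually_ge_atTop a] with T hT
        exact hFTC T hT
      by_contra hL
      set L := ∫ t in Set.Ioi a, X t with hLdef
      -- eventually |ψ T| is large
      have habs : Tendsto (fun T => |A T|) atTop (nhds |L|) := hAtend.abs
      have hev1 : ∀ᶠ T in atTop, |L|/2 ≤ |A T| := by
        have : |L|/2 < |L| := by
          have : 0 < |L| := abs_pos.mpr hL
          linarith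
        exact habs.eventually_const_le this
      -- W = ψ² t integrable
      have hW_int : IntegrableOn (fun t => (ψ t)^2 * t) (Set.Ioi a) := by
        have mW : AEStronglyMeasurable (fun t => (ψ t)^2 * t) (volume.restrict (Set.Ioi a)) := by
          apply AEStronglyMeasurable.mul _ mid
          simp only [pow_two]
          exact mψ.mul mψ
        refine Integrable.mono' ((hφint.add hint0).const_mul (2/m^2)) mW ?_
        filter_upwards [ae_restrict_mem measurableSet_Ioi] with t ht
        have ht' : 0 < t := ha.trans ht
        have hm2 : (0:ℝ) < m^2 := by positivity
        rw [Real.norm_eq_abs, abs_of_nonneg (by positivity)]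
        simp only [hψ, hI0, hIφ, Pi.add_apply]
        rw [div_mul_eq_mul_div, le_div_iff₀ hm2]
        nlinarith [mul_nonneg (sq_nonneg (q t)) ht'.le, mul_nonneg (sq_nonneg (p t)) ht'.le,
          mul_nonneg (mul_nonneg (sq_nonneg m) (sq_nonneg (φ t + φ₀ t))) ht'.le]
      -- derive contradiction
      have hcabs : 0 < |c| := abs_pos.mpr hc0
      set D : ℝ := (|L| * m / (8 * |c|))^2 with hD
      have hDpos : 0 < D := by
        have : 0 < |L| := abs_pos.mpr hL
        positivity
      have hev2 : ∀ᶠ T in atTop, D ≤ (ψ T)^2 * T := by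
        filter_upwards [hev1, eventually_ge_atTop (max a 1)] with T hT1 hT2
        have hTa : a ≤ T := le_trans (le_max_left _ _) hT2
        have hT1' : (1:ℝ) ≤ T := le_trans (le_max_right _ _) hT2
        have hTpos : 0 < T := lt_of_lt_of_le zero_lt_one hT1'
        have hmT : 0 < m * T := by positivity
        have hKc1b : Kc 1 (m*T) ≤ 4/(m*T)^2 := Kc1_bound _ hmT
        have hKc1nn : 0 ≤ Kc 1 (m*T) := (Kc_pos _ hmT 1).le
        have hApT : |A T| ≤ (4 * |c| / (m * T)) * |ψ T| := by
          have hAT : |A T| = T * (|c| * m * Kc 1 (m*T)) * |ψ T| := by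
            simp only [hA, hp]
            rw [abs_mul, abs_mul, abs_neg, abs_mul, abs_mul, abs_of_nonneg hKc1nn,
              abs_of_nonneg hTpos.le, abs_of_nonneg hm.le]
          rw [hAT]
          have h2 : T * (|c| * m * Kc 1 (m*T)) ≤ 4 * |c| / (m * T) := by
            calc T * (|c| * m * Kc 1 (m*T)) ≤ T * (|c| * m * (4/(m*T)^2)) := by gcongr
              _ = 4 * |c| / (m * T) := by field_simp
          exact mul_le_mul_of_nonneg_right h2 (abs_nonneg _)
        have h3 : |L|/2 ≤ (4 * |c| / (m * T)) * |ψ T| := le_trans hT1 hApT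
        have h4 : (0:ℝ) < 4 * |c| / (m * T) := by positivity
        have hψT : |L| * m * T / (8 * |c|) ≤ |ψ T| := by
          rw [mul_comm (4 * |c| / (m * T)), ← div_le_iff₀ h4] at h3
          refine le_trans (le_of_eq ?_) h3
          field_simp
          ring
        have h5 : (|L| * m * T / (8 * |c|))^2 ≤ (ψ T)^2 := by
          rw [← sq_abs (ψ T)]
          exact pow_le_pow_left₀ (by positivity) hψT 2
        have h6 : (|L| * m * T / (8 * |c|))^2 * T ≤ (ψ T)^2 * T :=
          mul_le_mul_of_nonneg_right h5 hTpos.le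
        have h7 : (|L| * m * T / (8 * |c|))^2 = D * T^2 := by
          rw [hD]; ring
        rw [h7] at h6
        nlinarith [mul_nonneg (sub_nonneg.mpr hT1') (by positivity : (0:ℝ) ≤ T^2 + T + 1)]
      obtain ⟨R₀, hR₀⟩ := eventually_atTop.mp (hev2.and (eventually_ge_atTop (a+1)))
      set R : ℝ := max R₀ (a+1) with hRdef
      have hsub : Set.Ioi R ⊆ Set.Ioi a := fun t ht => by
        simp only [Set.mem_Ioi] at *
        have : a + 1 ≤ R := le_max_right _ _
        linarith
      have hWR : IntegrableOn (fun t => (ψ t)^2 * t) (Set.Ioi R) := hW_int.mono_set hsub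
      have hconst : Integrable (fun _ : ℝ => D) (volume.restrict (Set.Ioi R)) := by
        refine Integrable.mono' hWR aestronglyMeasurable_const ?_
        filter_upwards [ae_restrict_mem measurableSet_Ioi] with t ht
        rw [Real.norm_eq_abs, abs_of_nonneg hDpos.le]
        exact (hR₀ t (le_trans (le_max_left _ _) (le_of_lt ht))).1
      rw [integrable_const_iff] at hconst
      rcases hconst with h | h
      · exact hDpos.ne' h
      · haveI := h
        have h' := measure_lt_top (volume.restrict (Set.Ioi R)) Set.univ
        rw [Measure.restrict_apply_univ, Real.volume_Ioi] at h'
        exact (lt_irrefl _ h')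
  -- conclusion
  have hIψnn : 0 ≤ ∫ t in Set.Ioi a, Iψ t :=
    setIntegral_nonneg measurableSet_Ioi
      (fun t ht => mul_nonneg (by positivity) (le_of_lt (ha.trans ht)))
  rw [hFeq, hsplit, hXzero]
  linarith


theorem stmt_17 (m a α : ℝ) (hm : 0 < m) (ha : 0 < a)
    (φ₀ : ℝ → ℝ) (hφ₀ : ∀ t, φ₀ t = α * besselK 0 (m * t) / besselK 0 (m * a)) :
    Ffun a m φ₀ = α ^ 2 * m * a * besselK 1 (m * a) / besselK 0 (m * a) ∧
      ∀ φ : ℝ → ℝ, ContDiffOn ℝ 2 φ (Set.Ici a) → φ a = α →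
        IntegrableOn (fun t => ((deriv φ t) ^ 2 + m ^ 2 * (φ t) ^ 2) * t)
          (Set.Ioi a) →
        Ffun a m φ₀ ≤ Ffun a m φ := by
  have hφ₀' : ∀ t, φ₀ t = (α / Kc 0 (m * a)) * Kc 0 (m * t) := by
    intro t
    rw [hφ₀ t, besselK_zero_eq, besselK_zero_eq]
    ring
  obtain ⟨h1, h2⟩ := main_lemma m a α hm ha φ₀ hφ₀'
  refine ⟨?_, h2⟩
  rw [besselK_zero_eq, besselK_one_eq]
  exact h1
end
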